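/- Let N ≥ 2 be a natural number and let s be a real number with 1/2 ≤ s < 1. Then there exists a constant C > 0 (depending on N and s) such that for every radial continuously differentiable function u : ℝ^N → ℂ whose L² norm and whose gradient's L² norm are finite, one has for every x ∈ ℝ^N: |x|^{(N−2s)/2} · |u(x)| ≤ C · ‖u‖_{L²}^{1−s} · ‖∇u‖_{L²}^{s}. -/

import Mathlib

open MeasureTheory Set

private lemma myCS {r ρ : ℝ} {f₁ f₂ : ℝ → ℝ}
    (h1 : ContinuousOn f₁ (Set.Icc r ρ)) (h2 : ContinuousOn f₂ (Set.Icc r ρ))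
    (hn1 : ∀ t ∈ Set.Ioc r ρ, 0 ≤ f₁ t) (hn2 : ∀ t ∈ Set.Ioc r ρ, 0 ≤ f₂ t) :
    ∫ t in Set.Ioc r ρ, f₁ t * f₂ t ≤
      (∫ t in Set.Ioc r ρ, f₁ t ^ 2) ^ ((1:ℝ)/2) *
        (∫ t in Set.Ioc r ρ, f₂ t ^ 2) ^ ((1:ℝ)/2) := by
  have hfin : IsFiniteMeasure (volume.restrict (Set.Ioc r ρ)) :=
    ⟨by rw [Measure.restrict_apply_univ]; exact measure_Ioc_lt_top⟩
  have mem : ∀ {f : ℝ → ℝ}, ContinuousOn f (Set.Icc r ρ) →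
      MemLp f (ENNReal.ofReal 2) (volume.restrict (Set.Ioc r ρ)) := by
    intro f hf
    obtain ⟨C, hC⟩ := isCompact_Icc.exists_bound_of_continuousOn hf
    exact MemLp.of_bound
      ((hf.mono Set.Ioc_subset_Icc_self).aestronglyMeasurable measurableSet_Ioc) C
      (by filter_upwards [ae_restrict_mem measurableSet_Ioc] with t ht
          exact hC t (Set.Ioc_subset_Icc_self ht))
  have hconj : Real.HolderConjugate 2 2 := Real.holderConjugate_iff.mpr ⟨one_lt_two, by norm_num⟩
  have hn1' : 0 ≤ᵐ[volume.restrict (Set.Ioc r ρ)] f₁ := by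
    filter_upwards [ae_restrict_mem measurableSet_Ioc] with t ht using hn1 t ht
  have hn2' : 0 ≤ᵐ[volume.restrict (Set.Ioc r ρ)] f₂ := by
    filter_upwards [ae_restrict_mem measurableSet_Ioc] with t ht using hn2 t ht
  have := MeasureTheory.integral_mul_le_Lp_mul_Lq_of_nonneg hconj hn1' hn2' (mem h1) (mem h2)
  have h22 : ∀ y : ℝ, y ^ (2:ℝ) = y ^ 2 := fun y => by
    rw [show (2:ℝ) = ((2:ℕ):ℝ) by norm_num, Real.rpow_natCast]
  simpa only [h22] using this

private lemma polar_bound {N : ℕ} (hN : 2 ≤ N) (v : EuclideanSpace ℝ (Fin N) → ℝ)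
    (hv : Integrable v) (φ : ℝ → ℝ) (hφnn : ∀ t, 0 ≤ φ t)
    (hradial : ∀ x : EuclideanSpace ℝ (Fin N), φ ‖x‖ ≤ v x)
    {r ρ : ℝ} (hr : 0 < r) :
    (N : ℝ) * (volume (Metric.ball (0:EuclideanSpace ℝ (Fin N)) 1)).toReal *
      ∫ t in Set.Ioc r ρ, t ^ (N-1) * φ t ≤ ∫ x, v x := by
  haveI : Nontrivial (EuclideanSpace ℝ (Fin N)) :=
    Module.nontrivial_of_finrank_pos (R := ℝ) (by rw [finrank_euclideanSpace_fin]; omega)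
  set F : ℝ → ℝ := (Set.Ioc r ρ).indicator φ with hF
  have hpolar := MeasureTheory.integral_fun_norm_addHaar
    (volume : Measure (EuclideanSpace ℝ (Fin N))) F
  rw [finrank_euclideanSpace_fin] at hpolar
  have hle : ∫ x : EuclideanSpace ℝ (Fin N), F ‖x‖ ≤ ∫ x, v x := by
    refine integral_mono_of_nonneg (Filter.Eventually.of_forall fun x => ?_) hv
      (Filter.Eventually.of_forall fun x => ?_)
    · exact Set.indicator_nonneg (fun t _ => hφnn t) _
    · by_cases hx : ‖x‖ ∈ Set.Ioc r ρ
      · show (Set.Ioc r ρ).indicator φ ‖x‖ ≤ v x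
        rw [Set.indicator_of_mem hx]; exact hradial x
      · show (Set.Ioc r ρ).indicator φ ‖x‖ ≤ v x
        rw [Set.indicator_of_notMem hx]
        exact le_trans (hφnn ‖x‖) (hradial x)
  have hrw : (fun y : ℝ => y ^ (N-1) • F y) =
      (Set.Ioc r ρ).indicator (fun y => y ^ (N-1) * φ y) := by
    funext y
    by_cases hy : y ∈ Set.Ioc r ρ <;>
      simp [hF, Set.indicator_of_mem, Set.indicator_of_notMem, hy]
  have hinter : Set.Ioi (0:ℝ) ∩ Set.Ioc r ρ = Set.Ioc r ρ :=
    Set.inter_eq_self_of_subset_right (fun t ht => lt_trans hr ht.1)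
  rw [hpolar, hrw, setIntegral_indicator measurableSet_Ioc, hinter] at hle
  calc (N : ℝ) * (volume (Metric.ball (0:EuclideanSpace ℝ (Fin N)) 1)).toReal *
      ∫ t in Set.Ioc r ρ, t ^ (N-1) * φ t
      = N • (volume (Metric.ball (0:EuclideanSpace ℝ (Fin N)) 1)).toReal •
        ∫ t in Set.Ioc r ρ, t ^ (N-1) * φ t := by
        rw [nsmul_eq_mul, smul_eq_mul, mul_assoc]
    _ ≤ ∫ x, v x := hle

private lemma fderiv_norm_radial {N : ℕ} {u : EuclideanSpace ℝ (Fin N) → ℂ}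
    (hu : ContDiff ℝ 1 u) (hrad : ∀ x y, ‖x‖ = ‖y‖ → u x = u y) :
    ∀ x y : EuclideanSpace ℝ (Fin N), ‖x‖ = ‖y‖ → ‖fderiv ℝ u x‖ = ‖fderiv ℝ u y‖ := by
  have key : ∀ (T : EuclideanSpace ℝ (Fin N) ≃ₗᵢ[ℝ] EuclideanSpace ℝ (Fin N))
      (x : EuclideanSpace ℝ (Fin N)), ‖fderiv ℝ u x‖ ≤ ‖fderiv ℝ u (T x)‖ := by
    intro T x
    set Tl : EuclideanSpace ℝ (Fin N) →L[ℝ] EuclideanSpace ℝ (Fin N) :=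
      T.toContinuousLinearEquiv.toContinuousLinearMap with hTl
    have hTlx : ∀ z, Tl z = T z := fun z => rfl
    have hd : HasFDerivAt u (fderiv ℝ u (T x)) (T x) :=
      ((hu.differentiable one_ne_zero) (T x)).hasFDerivAt
    have hcomp : HasFDerivAt (fun z => u (Tl z)) ((fderiv ℝ u (T x)).comp Tl) x := by
      have := hd.comp x (Tl.hasFDerivAt (x := x))
      exact this
    have huT : (fun z => u (Tl z)) = u := by
      funext z; rw [hTlx]; exact hrad (T z) z (T.norm_map z)
    rw [huT] at hcomp
    rw [hcomp.fderiv]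
    calc ‖(fderiv ℝ u (T x)).comp Tl‖ ≤ ‖fderiv ℝ u (T x)‖ * ‖Tl‖ :=
          ContinuousLinearMap.opNorm_comp_le _ _
      _ ≤ ‖fderiv ℝ u (T x)‖ * 1 := by
          gcongr
          refine ContinuousLinearMap.opNorm_le_bound _ zero_le_one fun z => ?_
          rw [hTlx, T.norm_map, one_mul]
      _ = ‖fderiv ℝ u (T x)‖ := mul_one _
  intro x y hxy
  rcases eq_or_ne x y with rfl | hne
  · rfl
  · set T := Submodule.reflection (ℝ ∙ (x - y))ᗮ with hT
    have hTx : T x = y := Submodule.reflection_sub hxy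
    have h1 : ‖fderiv ℝ u x‖ ≤ ‖fderiv ℝ u y‖ := by
      have := key T x; rwa [hTx] at this
    have h2 : ‖fderiv ℝ u y‖ ≤ ‖fderiv ℝ u x‖ := by
      have := key T.symm y
      have hTy : T.symm y = x := by rw [← hTx]; exact T.symm_apply_apply x
      rwa [hTy] at this
    exact le_antisymm h1 h2

set_option maxHeartbeats 2000000 in
/-- Strauss-type decay estimate for radial `C¹` functions with finite `L²` norm and
finite `L²` norm of the gradient:
`|x|^((N-2s)/2) |u(x)| ≤ C ‖u‖_{L²}^{1-s} ‖∇u‖_{L²}^{s}` for `1/2 ≤ s < 1`. -/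
theorem stmt1 (N : ℕ) (hN : 2 ≤ N) (s : ℝ) (hs : 1 / 2 ≤ s) (hs' : s < 1) :
    ∃ C > 0, ∀ u : EuclideanSpace ℝ (Fin N) → ℂ,
      ContDiff ℝ 1 u →
      (∀ x y, ‖x‖ = ‖y‖ → u x = u y) →
      Integrable (fun x => ‖u x‖ ^ 2) →
      Integrable (fun x => ‖fderiv ℝ u x‖ ^ 2) →
      ∀ x, ‖x‖ ^ (((N : ℝ) - 2 * s) / 2) * ‖u x‖ ≤
        C * ((∫ x, ‖u x‖ ^ 2) ^ ((1 : ℝ) / 2)) ^ (1 - s)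
          * ((∫ x, ‖fderiv ℝ u x‖ ^ 2) ^ ((1 : ℝ) / 2)) ^ s := by
  classical
  have hs0 : (0:ℝ) < s := lt_of_lt_of_le one_half_pos hs
  have hNR : (2:ℝ) ≤ (N:ℝ) := by exact_mod_cast hN
  have hNs : 0 < (N:ℝ) - 2*s := by nlinarith
  have h1s : 0 < 1 - s := by linarith
  have h22s : 0 < 2 - 2*s := by linarith
  haveI : Nontrivial (EuclideanSpace ℝ (Fin N)) :=
    Module.nontrivial_of_finrank_pos (R := ℝ) (by rw [finrank_euclideanSpace_fin]; omega)
  set c : ℝ := N * (volume (Metric.ball (0:EuclideanSpace ℝ (Fin N)) 1)).toReal with hc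
  have hcpos : 0 < c := by
    have h1 : (0:ℝ) < N := by positivity
    have h2 : 0 < (volume (Metric.ball (0:EuclideanSpace ℝ (Fin N)) 1)).toReal :=
      ENNReal.toReal_pos (Metric.measure_ball_pos _ _ one_pos).ne' measure_ball_lt_top.ne
    exact mul_pos h1 h2
  set K1 : ℝ := (2/c) ^ ((1:ℝ)/2) with hK1def
  set K2 : ℝ := (1/(c*(2-2*s))) ^ ((1:ℝ)/2) with hK2def
  have hK1 : 0 < K1 := Real.rpow_pos_of_pos (by positivity) _
  have hK2 : 0 < K2 := Real.rpow_pos_of_pos (by positivity) _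
  refine ⟨K1 + K2, by linarith, ?_⟩
  intro u hu hrad hA hB
  set A : ℝ := ∫ x, ‖u x‖^2 with hAdef
  set B : ℝ := ∫ x, ‖fderiv ℝ u x‖^2 with hBdef
  have hA0 : 0 ≤ A := integral_nonneg fun x => by positivity
  have hB0 : 0 ≤ B := integral_nonneg fun x => by positivity
  set m : ℝ := A ^ ((1:ℝ)/2) with hmdef
  set d : ℝ := B ^ ((1:ℝ)/2) with hddef
  have hm0 : 0 ≤ m := Real.rpow_nonneg hA0 _
  have hd0 : 0 ≤ d := Real.rpow_nonneg hB0 _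
  have hRHS0 : 0 ≤ (K1 + K2) * m ^ (1-s) * d ^ s :=
    mul_nonneg (mul_nonneg (by linarith) (Real.rpow_nonneg hm0 _)) (Real.rpow_nonneg hd0 _)
  -- the zero-function case
  have hzero_case : (∀ z, u z = 0) → ∀ x, ‖x‖ ^ (((N : ℝ) - 2 * s) / 2) * ‖u x‖ ≤
      (K1 + K2) * m ^ (1-s) * d ^ s := by
    intro hz x
    rw [hz x]
    simpa using hRHS0
  by_cases hAz : A = 0
  · -- then u ≡ 0
    have h1 : (fun x : EuclideanSpace ℝ (Fin N) => ‖u x‖^2) =ᵐ[volume] 0 :=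
      (integral_eq_zero_iff_of_nonneg_ae (Filter.Eventually.of_forall fun x => by positivity)
        hA).1 hAz
    have h2 : (fun x : EuclideanSpace ℝ (Fin N) => ‖u x‖^2) = 0 :=
      (Continuous.ae_eq_iff_eq volume (hu.continuous.norm.pow 2) continuous_const).1 h1
    refine hzero_case fun z => ?_
    have h3 := congrFun h2 z
    simp only [Pi.zero_apply] at h3
    exact norm_eq_zero.1 (pow_eq_zero_iff two_ne_zero |>.1 h3)
  by_cases hBz : B = 0
  · -- then fderiv u ≡ 0 and u is constant, hence zero
    have h1 : (fun x : EuclideanSpace ℝ (Fin N) => ‖fderiv ℝ u x‖^2) =ᵐ[volume] 0 :=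
      (integral_eq_zero_iff_of_nonneg_ae (Filter.Eventually.of_forall fun x => by positivity)
        hB).1 hBz
    have h2 : (fun x : EuclideanSpace ℝ (Fin N) => ‖fderiv ℝ u x‖^2) = 0 :=
      (Continuous.ae_eq_iff_eq volume ((hu.continuous_fderiv one_ne_zero).norm.pow 2)
        continuous_const).1 h1
    have hconst : ∀ z, u z = u 0 := by
      intro z
      refine is_const_of_fderiv_eq_zero (𝕜 := ℝ) (hu.differentiable one_ne_zero) (fun y => ?_) z 0
      have h3 := congrFun h2 y
      simp only [Pi.zero_apply] at h3
      exact norm_eq_zero.1 (pow_eq_zero_iff two_ne_zero |>.1 h3)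
    have hu00 : u 0 = 0 := by
      by_contra hne
      have hAconst : (fun x : EuclideanSpace ℝ (Fin N) => ‖u x‖^2)
          = fun _ => ‖u 0‖^2 := funext fun x => by rw [hconst x]
      rw [hAconst] at hA
      rcases integrable_const_iff.1 hA with hcz | hfin
      · exact hne (norm_eq_zero.1 (pow_eq_zero_iff two_ne_zero |>.1 hcz))
      · haveI : NoncompactSpace (EuclideanSpace ℝ (Fin N)) :=
          NormedSpace.noncompactSpace ℝ _
        have hfin := measure_lt_top (volume : Measure (EuclideanSpace ℝ (Fin N))) univ
        rw [measure_univ_of_isAddLeftInvariant] at hfin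
        exact absurd hfin (by simp)
    exact hzero_case fun z => by rw [hconst z, hu00]
  -- main case : A, B > 0
  have hApos : 0 < A := lt_of_le_of_ne hA0 (Ne.symm hAz)
  have hBpos : 0 < B := lt_of_le_of_ne hB0 (Ne.symm hBz)
  have hmpos : 0 < m := Real.rpow_pos_of_pos hApos _
  have hdpos : 0 < d := Real.rpow_pos_of_pos hBpos _
  -- the radial profile
  have hN0 : 0 < N := by omega
  set e : EuclideanSpace ℝ (Fin N) := EuclideanSpace.single ⟨0, hN0⟩ (1:ℝ) with hedef
  have hne : ‖e‖ = 1 := by rw [hedef, EuclideanSpace.norm_single]; norm_num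
  set g : ℝ → ℂ := fun t => u (t • e) with hgdef
  set h : ℝ → ℝ := fun t => ‖fderiv ℝ u (t • e)‖ with hhdef
  have hnorm_smul : ∀ t : ℝ, 0 ≤ t → ‖t • e‖ = t := fun t ht => by
    rw [norm_smul, hne, mul_one, Real.norm_eq_abs, abs_of_nonneg ht]
  have hux : ∀ x, u x = g ‖x‖ := fun x =>
    hrad x (‖x‖ • e) (by rw [hnorm_smul _ (norm_nonneg x)])
  have hfx : ∀ x, ‖fderiv ℝ u x‖ = h ‖x‖ := fun x =>
    fderiv_norm_radial hu hrad x (‖x‖ • e) (by rw [hnorm_smul _ (norm_nonneg x)])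
  -- derivative of the profile
  set D : ℝ → ℂ := fun t => fderiv ℝ u (t • e) e with hDdef
  have hD : ∀ t, HasDerivAt g (D t) t := by
    intro t
    have h1 : HasDerivAt (fun τ : ℝ => τ • e) e t := by
      simpa using (hasDerivAt_id t).smul_const e
    exact ((hu.differentiable one_ne_zero) (t • e)).hasFDerivAt.comp_hasDerivAt t h1
  have hDnorm : ∀ t, ‖D t‖ ≤ h t := fun t => by
    calc ‖D t‖ ≤ ‖fderiv ℝ u (t • e)‖ * ‖e‖ := ContinuousLinearMap.le_opNorm _ _
      _ = h t := by rw [hne, mul_one]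
  -- continuity
  have hsmulc : Continuous fun t : ℝ => t • e := continuous_id.smul continuous_const
  have hgc : Continuous g := hu.continuous.comp hsmulc
  have hfdc : Continuous (fderiv ℝ u) := hu.continuous_fderiv one_ne_zero
  have hDc : Continuous D := (hfdc.comp hsmulc).clm_apply continuous_const
  have hhc : Continuous h := (hfdc.comp hsmulc).norm
  -- radial integral bounds from polar coordinates
  have hA5 : ∀ r ρ : ℝ, 0 < r → ∫ t in Set.Ioc r ρ, t^(N-1) * ‖g t‖^2 ≤ A/c := by
    intro r ρ hr
    rw [le_div_iff₀' hcpos]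
    have := polar_bound hN _ hA (fun t => ‖g t‖^2) (fun t => by positivity)
      (fun x => le_of_eq (by rw [hux x])) (ρ := ρ) hr
    rw [← hc, ← hAdef] at this
    exact this
  have hB5 : ∀ r ρ : ℝ, 0 < r → ∫ t in Set.Ioc r ρ, t^(N-1) * (h t)^2 ≤ B/c := by
    intro r ρ hr
    rw [le_div_iff₀' hcpos]
    have := polar_bound hN _ hB (fun t => (h t)^2) (fun t => by positivity)
      (fun x => le_of_eq (by rw [hfx x])) (ρ := ρ) hr
    rw [← hc, ← hBdef] at this
    exact this
  have hh0 : ∀ t, 0 ≤ h t := fun t => norm_nonneg _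
  -- weighted continuous functions
  have hp_cont : ∀ (a : ℝ) {r ρ : ℝ}, 0 < r →
      ContinuousOn (fun t : ℝ => t ^ a) (Set.Icc r ρ) := by
    intro a r ρ hr
    exact ContinuousOn.rpow_const continuousOn_id
      (fun t ht => Or.inl (ne_of_gt (lt_of_lt_of_le hr ht.1)))
  have hIocIcc : ∀ {f : ℝ → ℝ} {r ρ : ℝ}, ContinuousOn f (Set.Icc r ρ) →
      IntegrableOn f (Set.Ioc r ρ) := fun hf =>
    (hf.integrableOn_compact isCompact_Icc).mono_set Set.Ioc_subset_Icc_self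
  -- square identity for weighted factors
  have hsqw : ∀ {r ρ : ℝ}, 0 < r → ∀ F : ℝ → ℝ,
      ∫ t in Set.Ioc r ρ, (t ^ (((N:ℝ)-1)/2) * F t)^2 =
        ∫ t in Set.Ioc r ρ, t^(N-1) * (F t)^2 := by
    intro r ρ hr F
    refine setIntegral_congr_fun measurableSet_Ioc fun t ht => ?_
    have ht0 : 0 < t := lt_trans hr ht.1
    rw [mul_pow]
    congr 1
    rw [← Real.rpow_natCast (t ^ (((N:ℝ)-1)/2)) 2, ← Real.rpow_mul ht0.le,
      ← Real.rpow_natCast t (N-1)]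
    congr 1
    push_cast [Nat.cast_sub (by omega : 1 ≤ N)]
    ring
  -- Cauchy–Schwarz bound 1
  have hCS1 : ∀ r ρ : ℝ, 0 < r → r ≤ ρ →
      ∫ t in Set.Ioc r ρ, ‖g t‖ * h t ≤ r ^ ((1:ℝ)-N) * (m*d/c) := by
    intro r ρ hr hrρ
    set f₁ : ℝ → ℝ := fun t => t ^ (((N:ℝ)-1)/2) * ‖g t‖ with hf₁
    set f₂ : ℝ → ℝ := fun t => t ^ (((N:ℝ)-1)/2) * h t with hf₂
    have hc₁ : ContinuousOn f₁ (Set.Icc r ρ) := (hp_cont _ hr).mul hgc.norm.continuousOn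
    have hc₂ : ContinuousOn f₂ (Set.Icc r ρ) := (hp_cont _ hr).mul hhc.continuousOn
    have hn₁ : ∀ t ∈ Set.Ioc r ρ, 0 ≤ f₁ t := fun t ht =>
      mul_nonneg (Real.rpow_nonneg (le_of_lt (lt_trans hr ht.1)) _) (norm_nonneg _)
    have hn₂ : ∀ t ∈ Set.Ioc r ρ, 0 ≤ f₂ t := fun t ht =>
      mul_nonneg (Real.rpow_nonneg (le_of_lt (lt_trans hr ht.1)) _) (hh0 t)
    have key : ∀ t ∈ Set.Ioc r ρ, ‖g t‖ * h t ≤ r ^ ((1:ℝ)-N) * (f₁ t * f₂ t) := by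
      intro t ht
      have ht0 : 0 < t := lt_trans hr ht.1
      have e1 : f₁ t * f₂ t = t ^ ((N:ℝ)-1) * (‖g t‖ * h t) := by
        rw [hf₁, hf₂]
        have e0 : t ^ (((N:ℝ)-1)/2) * t ^ (((N:ℝ)-1)/2) = t ^ ((N:ℝ)-1) := by
          rw [← Real.rpow_add ht0]; congr 1; ring
        calc (t ^ (((N:ℝ)-1)/2) * ‖g t‖) * (t ^ (((N:ℝ)-1)/2) * h t)
            = (t ^ (((N:ℝ)-1)/2) * t ^ (((N:ℝ)-1)/2)) * (‖g t‖ * h t) := by ring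
          _ = _ := by rw [e0]
      have e2 : ‖g t‖ * h t = t ^ ((1:ℝ)-N) * (f₁ t * f₂ t) := by
        rw [e1, ← mul_assoc, ← Real.rpow_add ht0]
        have e0 : ((1:ℝ)-N) + ((N:ℝ)-1) = 0 := by ring
        rw [e0, Real.rpow_zero, one_mul]
      rw [e2]
      have h3 : t ^ ((1:ℝ)-N) ≤ r ^ ((1:ℝ)-N) :=
        Real.rpow_le_rpow_of_nonpos hr ht.1.le (by linarith)
      exact mul_le_mul_of_nonneg_right h3 (mul_nonneg (hn₁ t ht) (hn₂ t ht))
    have hint1 : IntegrableOn (fun t => ‖g t‖ * h t) (Set.Ioc r ρ) :=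
      hIocIcc (hgc.norm.mul hhc).continuousOn
    have hint2 : IntegrableOn (fun t => r ^ ((1:ℝ)-N) * (f₁ t * f₂ t)) (Set.Ioc r ρ) :=
      hIocIcc (continuousOn_const.mul (hc₁.mul hc₂))
    calc ∫ t in Set.Ioc r ρ, ‖g t‖ * h t
        ≤ ∫ t in Set.Ioc r ρ, r ^ ((1:ℝ)-N) * (f₁ t * f₂ t) :=
          setIntegral_mono_on hint1 hint2 measurableSet_Ioc key
      _ = r ^ ((1:ℝ)-N) * ∫ t in Set.Ioc r ρ, f₁ t * f₂ t := integral_const_mul _ _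
      _ ≤ r ^ ((1:ℝ)-N) *
          ((∫ t in Set.Ioc r ρ, f₁ t ^2) ^ ((1:ℝ)/2) *
            (∫ t in Set.Ioc r ρ, f₂ t ^2) ^ ((1:ℝ)/2)) :=
          mul_le_mul_of_nonneg_left (myCS hc₁ hc₂ hn₁ hn₂) (Real.rpow_nonneg hr.le _)
      _ ≤ r ^ ((1:ℝ)-N) * ((A/c) ^ ((1:ℝ)/2) * (B/c) ^ ((1:ℝ)/2)) := by
          refine mul_le_mul_of_nonneg_left ?_ (Real.rpow_nonneg hr.le _)
          have i₁ : ∫ t in Set.Ioc r ρ, f₁ t ^2 ≤ A/c := by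
            rw [hf₁, hsqw hr]; exact hA5 r ρ hr
          have i₂ : ∫ t in Set.Ioc r ρ, f₂ t ^2 ≤ B/c := by
            rw [hf₂, hsqw hr]; exact hB5 r ρ hr
          have j₁ : 0 ≤ ∫ t in Set.Ioc r ρ, f₁ t ^2 :=
            setIntegral_nonneg measurableSet_Ioc fun t ht => sq_nonneg _
          have j₂ : 0 ≤ ∫ t in Set.Ioc r ρ, f₂ t ^2 :=
            setIntegral_nonneg measurableSet_Ioc fun t ht => sq_nonneg _
          exact mul_le_mul (Real.rpow_le_rpow j₁ i₁ (by norm_num))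
            (Real.rpow_le_rpow j₂ i₂ (by norm_num)) (Real.rpow_nonneg j₂ _)
            (Real.rpow_nonneg (div_nonneg hA0 hcpos.le) _)
      _ = r ^ ((1:ℝ)-N) * (m*d/c) := by
          have hcc : (c:ℝ) ^ ((1:ℝ)/2) * c ^ ((1:ℝ)/2) = c := by
            rw [← Real.rpow_add hcpos]; norm_num
          rw [Real.div_rpow hA0 hcpos.le, Real.div_rpow hB0 hcpos.le,
            div_mul_div_comm, hcc, ← hmdef, ← hddef]
  -- Cauchy–Schwarz bound 2
  have hCS2 : ∀ r ρ : ℝ, 0 < r → r ≤ ρ →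
      ∫ t in Set.Ioc r ρ, h t ≤
        (∫ t in Set.Ioc r ρ, t ^ ((1:ℝ)-N)) ^ ((1:ℝ)/2) * (B/c) ^ ((1:ℝ)/2) := by
    intro r ρ hr hrρ
    set f₁ : ℝ → ℝ := fun t => t ^ (((1:ℝ)-N)/2) with hf₁
    set f₂ : ℝ → ℝ := fun t => t ^ (((N:ℝ)-1)/2) * h t with hf₂
    have hc₁ : ContinuousOn f₁ (Set.Icc r ρ) := hp_cont _ hr
    have hc₂ : ContinuousOn f₂ (Set.Icc r ρ) := (hp_cont _ hr).mul hhc.continuousOn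
    have hn₁ : ∀ t ∈ Set.Ioc r ρ, 0 ≤ f₁ t := fun t ht =>
      Real.rpow_nonneg (le_of_lt (lt_trans hr ht.1)) _
    have hn₂ : ∀ t ∈ Set.Ioc r ρ, 0 ≤ f₂ t := fun t ht =>
      mul_nonneg (Real.rpow_nonneg (le_of_lt (lt_trans hr ht.1)) _) (hh0 t)
    have e0 : ∫ t in Set.Ioc r ρ, h t = ∫ t in Set.Ioc r ρ, f₁ t * f₂ t := by
      refine setIntegral_congr_fun measurableSet_Ioc fun t ht => ?_
      have ht0 : 0 < t := lt_trans hr ht.1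
      rw [hf₁, hf₂, ← mul_assoc, ← Real.rpow_add ht0]
      have e1 : ((1:ℝ)-N)/2 + ((N:ℝ)-1)/2 = 0 := by ring
      rw [e1, Real.rpow_zero, one_mul]
    have e1 : ∫ t in Set.Ioc r ρ, f₁ t ^2 = ∫ t in Set.Ioc r ρ, t ^ ((1:ℝ)-N) := by
      refine setIntegral_congr_fun measurableSet_Ioc fun t ht => ?_
      have ht0 : 0 < t := lt_trans hr ht.1
      rw [hf₁, ← Real.rpow_natCast (t ^ (((1:ℝ)-N)/2)) 2, ← Real.rpow_mul ht0.le]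
      norm_num
    have e2 : ∫ t in Set.Ioc r ρ, f₂ t ^2 ≤ B/c := by
      rw [hf₂, hsqw hr]; exact hB5 r ρ hr
    have j₂ : 0 ≤ ∫ t in Set.Ioc r ρ, f₂ t ^2 :=
      setIntegral_nonneg measurableSet_Ioc fun t ht => sq_nonneg _
    calc ∫ t in Set.Ioc r ρ, h t = ∫ t in Set.Ioc r ρ, f₁ t * f₂ t := e0
      _ ≤ (∫ t in Set.Ioc r ρ, f₁ t ^2) ^ ((1:ℝ)/2) *
            (∫ t in Set.Ioc r ρ, f₂ t ^2) ^ ((1:ℝ)/2) := myCS hc₁ hc₂ hn₁ hn₂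
      _ ≤ (∫ t in Set.Ioc r ρ, t ^ ((1:ℝ)-N)) ^ ((1:ℝ)/2) * (B/c) ^ ((1:ℝ)/2) := by
          rw [e1]
          exact mul_le_mul_of_nonneg_left (Real.rpow_le_rpow j₂ e2 (by norm_num))
            (Real.rpow_nonneg (e1 ▸ setIntegral_nonneg measurableSet_Ioc
              fun t ht => sq_nonneg _) _)
  -- FTC for g
  have hFTCg : ∀ r ρ : ℝ, 0 < r → r ≤ ρ → ‖g r‖ ≤ ‖g ρ‖ + ∫ t in Set.Ioc r ρ, h t := by
    intro r ρ hr hrρ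
    have heq : ∫ t in r..ρ, D t = g ρ - g r :=
      intervalIntegral.integral_eq_sub_of_hasDerivAt (fun t _ => hD t)
        (hDc.intervalIntegrable r ρ)
    have h1 : ‖g r‖ ≤ ‖g ρ‖ + ‖∫ t in r..ρ, D t‖ := by
      have e : g r = g ρ - ∫ t in r..ρ, D t := by rw [heq]; ring
      rw [e]; exact norm_sub_le _ _
    have h2 : ‖∫ t in r..ρ, D t‖ ≤ ∫ t in r..ρ, ‖D t‖ :=
      intervalIntegral.norm_integral_le_integral_norm hrρ
    have h3 : ∫ t in r..ρ, ‖D t‖ ≤ ∫ t in r..ρ, h t :=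
      intervalIntegral.integral_mono_on hrρ (hDc.norm.intervalIntegrable _ _)
        (hhc.intervalIntegrable _ _) (fun t _ => hDnorm t)
    have h4 : ∫ t in r..ρ, h t = ∫ t in Set.Ioc r ρ, h t :=
      intervalIntegral.integral_of_le hrρ
    linarith
  -- FTC for ‖g‖²
  have hnormsq : ∀ z : ℂ, ‖z‖^2 = z.re^2 + z.im^2 := fun z => by
    rw [Complex.sq_norm, Complex.normSq_apply]; ring
  have hFTCφ : ∀ r ρ : ℝ, 0 < r → r ≤ ρ →
      ‖g r‖^2 ≤ ‖g ρ‖^2 + 2 * ∫ t in Set.Ioc r ρ, ‖g t‖ * h t := by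
    intro r ρ hr hrρ
    set φ' : ℝ → ℝ := fun t => 2*((g t).re*(D t).re + (g t).im*(D t).im) with hφ'
    have hre : ∀ t, HasDerivAt (fun τ => (g τ).re) ((D t).re) t := fun t => by
      exact Complex.reCLM.hasFDerivAt.comp_hasDerivAt t (hD t)
    have him : ∀ t, HasDerivAt (fun τ => (g τ).im) ((D t).im) t := fun t => by
      exact Complex.imCLM.hasFDerivAt.comp_hasDerivAt t (hD t)
    have hder : ∀ t, HasDerivAt (fun τ => ‖g τ‖^2) (φ' t) t := by
      intro t
      have h1 := ((hre t).mul (hre t)).add ((him t).mul (him t))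
      have h2 : (fun τ => (g τ).re*(g τ).re + (g τ).im*(g τ).im) = fun τ => ‖g τ‖^2 := by
        funext τ; rw [hnormsq]; ring
      simp only [Pi.add_def, Pi.mul_def] at h1
      rw [h2] at h1
      refine h1.congr_deriv ?_
      rw [hφ']; ring
    have hφ'c : Continuous φ' := by
      apply continuous_const.mul
      exact ((Complex.continuous_re.comp hgc).mul (Complex.continuous_re.comp hDc)).add
        ((Complex.continuous_im.comp hgc).mul (Complex.continuous_im.comp hDc))
    have heq : ∫ t in r..ρ, φ' t = ‖g ρ‖^2 - ‖g r‖^2 :=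
      intervalIntegral.integral_eq_sub_of_hasDerivAt (fun t _ => hder t)
        (hφ'c.intervalIntegrable r ρ)
    have hb : ∀ t, |φ' t| ≤ 2*(‖g t‖ * h t) := by
      intro t
      have e1 : φ' t = 2 * (g t * (starRingEnd ℂ) (D t)).re := by
        rw [hφ', Complex.mul_re, Complex.conj_re, Complex.conj_im]; ring
      rw [e1, abs_mul, abs_two]
      refine mul_le_mul_of_nonneg_left ?_ (by norm_num)
      calc |(g t * (starRingEnd ℂ) (D t)).re| ≤ ‖g t * (starRingEnd ℂ) (D t)‖ :=
            Complex.abs_re_le_norm _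
        _ = ‖g t‖ * ‖D t‖ := by rw [norm_mul, Complex.norm_conj]
        _ ≤ ‖g t‖ * h t := by
            exact mul_le_mul_of_nonneg_left (hDnorm t) (norm_nonneg _)
    have c2 : ∫ t in r..ρ, |φ' t| ≤ ∫ t in r..ρ, 2*(‖g t‖ * h t) :=
      intervalIntegral.integral_mono_on hrρ (hφ'c.abs.intervalIntegrable r ρ)
        ((continuous_const.mul (hgc.norm.mul hhc)).intervalIntegrable r ρ) (fun t _ => hb t)
    have c1 := intervalIntegral.abs_integral_le_integral_abs (f := φ') (μ := volume) hrρ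
    have c0 := neg_abs_le (∫ t in r..ρ, φ' t)
    have c3 : ∫ t in r..ρ, 2*(‖g t‖ * h t) = 2 * ∫ t in Set.Ioc r ρ, ‖g t‖ * h t := by
      rw [intervalIntegral.integral_of_le hrρ, integral_const_mul]
    have : ‖g r‖^2 = ‖g ρ‖^2 - ∫ t in r..ρ, φ' t := by rw [heq]; ring
    linarith
  -- tails are small
  have htail : ∀ r : ℝ, 0 < r → ∀ ε : ℝ, 0 < ε → ∃ ρ, r ≤ ρ ∧ ‖g ρ‖^2 ≤ ε := by
    intro r hr ε hε
    by_contra hcon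
    push_neg at hcon
    set R : ℝ := max r (max 1 ((N:ℝ)*(A/c)/ε + r^N + 1)) with hRdef
    have hrR : r ≤ R := le_max_left _ _
    have hR1 : (1:ℝ) ≤ R := le_trans (le_max_left _ _) (le_max_right _ _)
    have hRbig : (N:ℝ)*(A/c)/ε + r^N + 1 ≤ R :=
      le_trans (le_max_right _ _) (le_max_right _ _)
    have hRN : (N:ℝ)*(A/c)/ε + r^N + 1 ≤ R^N :=
      le_trans hRbig (le_self_pow₀ hR1 (by omega))
    have h2 : ∫ t in Set.Ioc r R, ε * t^(N-1) ≤ ∫ t in Set.Ioc r R, t^(N-1)*‖g t‖^2 := by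
      refine setIntegral_mono_on ?_ ?_ measurableSet_Ioc fun t ht => ?_
      · exact hIocIcc (continuous_const.mul (continuous_pow _)).continuousOn
      · exact hIocIcc ((continuous_pow _).mul (hgc.norm.pow 2)).continuousOn
      · have ht0 : 0 < t := lt_trans hr ht.1
        calc ε * t^(N-1) ≤ ‖g t‖^2 * t^(N-1) :=
              mul_le_mul_of_nonneg_right (le_of_lt (hcon t ht.1.le)) (pow_nonneg ht0.le _)
          _ = t^(N-1)*‖g t‖^2 := by ring
    have h3 : ∫ t in Set.Ioc r R, ε * t^(N-1) = ε * ((R^N - r^N)/N) := by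
      rw [integral_const_mul, ← intervalIntegral.integral_of_le hrR, integral_pow]
      have hNN : N - 1 + 1 = N := by omega
      rw [hNN]
      have : ((N-1:ℕ):ℝ)+1 = (N:ℝ) := by
        push_cast [Nat.cast_sub (by omega : 1 ≤ N)]; ring
      rw [this]
    have h4 : ε * ((R^N - r^N)/N) ≤ A/c := le_trans (le_of_eq h3.symm)
      (le_trans h2 (hA5 r R hr))
    have hNpos : (0:ℝ) < N := by positivity
    have key : ε*(R^N - r^N) ≤ (A/c)*N := by
      rw [mul_div_assoc'] at h4
      exact (div_le_iff₀ hNpos).1 h4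
    have hRN' : (N:ℝ)*(A/c)/ε + 1 ≤ R^N - r^N := by linarith
    have e5 : ε*((N:ℝ)*(A/c)/ε) = (N:ℝ)*(A/c) := by field_simp
    have key2 : ε*((N:ℝ)*(A/c)/ε + 1) ≤ ε*(R^N - r^N) :=
      mul_le_mul_of_nonneg_left hRN' hε.le
    rw [mul_add, e5, mul_one] at key2
    linarith
  -- pointwise decay, s = 1/2 version
  have hP : ∀ r : ℝ, 0 < r → ‖g r‖^2 ≤ 2 * r^((1:ℝ)-N) * (m*d/c) := by
    intro r hr
    have hforall : ∀ ε : ℝ, 0 < ε → ‖g r‖^2 ≤ 2 * r^((1:ℝ)-N) * (m*d/c) + ε := by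
      intro ε hε
      obtain ⟨ρ, hrρ, hgρ⟩ := htail r hr ε hε
      have h1 := hFTCφ r ρ hr hrρ
      have h2 := hCS1 r ρ hr hrρ
      linarith
    by_contra hlt
    push_neg at hlt
    have := hforall ((‖g r‖^2 - 2 * r^((1:ℝ)-N) * (m*d/c))/2) (by linarith)
    linarith
  -- pointwise decay in terms of ρ₀
  set ρ₀ : ℝ := m/d with hρ₀def
  have hρ₀pos : 0 < ρ₀ := div_pos hmpos hdpos
  have sqhelp : ∀ x : ℝ, 0 ≤ x → ∀ a : ℝ, (x^a)^2 = x^(a*2) := by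
    intro x hx a
    rw [← Real.rpow_natCast (x^a) 2, ← Real.rpow_mul hx]
    norm_num
  have hPr : ∀ r : ℝ, 0 < r → ‖g r‖ ≤ K1 * (r^(((1:ℝ)-N)/2) * (ρ₀^((1:ℝ)/2) * d)) := by
    intro r hr
    have hRHS : 0 ≤ K1 * (r^(((1:ℝ)-N)/2) * (ρ₀^((1:ℝ)/2) * d)) :=
      mul_nonneg hK1.le (mul_nonneg (Real.rpow_nonneg hr.le _)
        (mul_nonneg (Real.rpow_nonneg hρ₀pos.le _) hd0))
    have hsq : (K1 * (r^(((1:ℝ)-N)/2) * (ρ₀^((1:ℝ)/2) * d)))^2 = 2 * r^((1:ℝ)-N) * (m*d/c) := by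
      have e1 : K1^2 = 2/c := by
        rw [hK1def, sqhelp _ (by positivity) _, show ((1:ℝ)/2*2) = 1 by norm_num,
          Real.rpow_one]
      have e2 : (r^(((1:ℝ)-N)/2))^2 = r^((1:ℝ)-N) := by
        rw [sqhelp _ hr.le]; congr 1; ring
      have e3 : (ρ₀^((1:ℝ)/2))^2 = ρ₀ := by
        rw [sqhelp _ hρ₀pos.le, show ((1:ℝ)/2*2) = 1 by norm_num, Real.rpow_one]
      have e4 : ρ₀ * d^2 = m * d := by rw [hρ₀def]; field_simp
      calc (K1 * (r^(((1:ℝ)-N)/2) * (ρ₀^((1:ℝ)/2) * d)))^2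
          = K1^2 * ((r^(((1:ℝ)-N)/2))^2 * ((ρ₀^((1:ℝ)/2))^2 * d^2)) := by ring
        _ = (2/c) * (r^((1:ℝ)-N) * (ρ₀ * d^2)) := by rw [e1, e2, e3]
        _ = (2/c) * (r^((1:ℝ)-N) * (m*d)) := by rw [e4]
        _ = 2 * r^((1:ℝ)-N) * (m*d/c) := by ring
    have h1 := hP r hr
    rw [← hsq] at h1
    have h2 := Real.sqrt_le_sqrt h1
    rwa [Real.sqrt_sq (norm_nonneg _), Real.sqrt_sq hRHS] at h2
  -- the key algebraic identity
  have hmd : d * ρ₀^(1-s) = m^(1-s) * d^s := by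
    have e1 : ρ₀^(1-s) = m^(1-s) * d^(s-1) := by
      rw [hρ₀def, Real.div_rpow hm0 hd0, div_eq_mul_inv, ← Real.rpow_neg hd0]
      congr 1; ring
    have e2 : d * d^(s-1) = d^s := by
      nth_rewrite 1 [← Real.rpow_one d]
      rw [← Real.rpow_add hdpos]; congr 1; ring
    calc d * ρ₀^(1-s) = m^(1-s) * (d * d^(s-1)) := by rw [e1]; ring
      _ = m^(1-s) * d^s := by rw [e2]
  -- final pointwise estimate
  intro x
  by_cases hx0 : x = (0 : EuclideanSpace ℝ (Fin N))
  · rw [hx0]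
    simp only [norm_zero]
    rw [Real.zero_rpow (div_pos hNs two_pos).ne', zero_mul]
    exact hRHS0
  have hr : 0 < ‖x‖ := norm_pos_iff.2 hx0
  rw [hux x]
  set r : ℝ := ‖x‖ with hrdef
  rw [show (K1+K2) * m^(1-s) * d^s = (K1+K2) * (d * ρ₀^(1-s)) by rw [hmd, mul_assoc]]
  by_cases hcase : ρ₀ ≤ r
  · -- large r
    have hb := hPr r hr
    calc r ^ (((N:ℝ)-2*s)/2) * ‖g r‖
        ≤ r ^ (((N:ℝ)-2*s)/2) * (K1 * (r^(((1:ℝ)-N)/2) * (ρ₀^((1:ℝ)/2) * d))) :=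
          mul_le_mul_of_nonneg_left hb (Real.rpow_nonneg hr.le _)
      _ = K1 * (d * (ρ₀^((1:ℝ)/2) * (r ^ (((N:ℝ)-2*s)/2) * r^(((1:ℝ)-N)/2)))) := by ring
      _ = K1 * (d * (ρ₀^((1:ℝ)/2) * r^(((1:ℝ)-2*s)/2))) := by
          rw [← Real.rpow_add hr, show (((N:ℝ)-2*s)/2 + ((1:ℝ)-N)/2) = ((1:ℝ)-2*s)/2 by ring]
      _ ≤ K1 * (d * (ρ₀^((1:ℝ)/2) * ρ₀^(((1:ℝ)-2*s)/2))) := by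
          refine mul_le_mul_of_nonneg_left (mul_le_mul_of_nonneg_left
            (mul_le_mul_of_nonneg_left ?_ (Real.rpow_nonneg hρ₀pos.le _)) hd0) hK1.le
          exact Real.rpow_le_rpow_of_nonpos hρ₀pos hcase (by linarith)
      _ = K1 * (d * ρ₀^(1-s)) := by
          rw [← Real.rpow_add hρ₀pos, show ((1:ℝ)/2 + ((1:ℝ)-2*s)/2) = 1-s by ring]
      _ ≤ (K1+K2) * (d * ρ₀^(1-s)) :=
          mul_le_mul_of_nonneg_right (by linarith)
            (mul_nonneg hd0 (Real.rpow_nonneg hρ₀pos.le _))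
  · -- small r
    push_neg at hcase
    have hrρ : r ≤ ρ₀ := hcase.le
    set W : ℝ := ∫ t in Set.Ioc r ρ₀, t ^ ((1:ℝ)-N) with hWdef
    have hW0 : 0 ≤ W := setIntegral_nonneg measurableSet_Ioc fun t ht =>
      Real.rpow_nonneg (le_of_lt (lt_trans hr ht.1)) _
    have hq := hFTCg r ρ₀ hr hrρ
    have hcs := hCS2 r ρ₀ hr hrρ
    rw [← hWdef] at hcs
    have hWb : W ≤ r^(2*s-(N:ℝ)) * (ρ₀^(2-2*s)/(2-2*s)) := by
      have step1 : W ≤ ∫ t in Set.Ioc r ρ₀, r^(2*s-(N:ℝ)) * t^((1:ℝ)-2*s) := by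
        rw [hWdef]
        refine setIntegral_mono_on (hIocIcc (hp_cont _ hr))
          (hIocIcc (continuousOn_const.mul (hp_cont _ hr))) measurableSet_Ioc
          fun t ht => ?_
        have ht0 : 0 < t := lt_trans hr ht.1
        have e1 : t ^ ((1:ℝ)-N) = t^(2*s-(N:ℝ)) * t^((1:ℝ)-2*s) := by
          rw [← Real.rpow_add ht0]; congr 1; ring
        rw [e1]
        exact mul_le_mul_of_nonneg_right
          (Real.rpow_le_rpow_of_nonpos hr ht.1.le (by linarith))
          (Real.rpow_nonneg ht0.le _)
      have step2 : ∫ t in Set.Ioc r ρ₀, r^(2*s-(N:ℝ)) * t^((1:ℝ)-2*s)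
          = r^(2*s-(N:ℝ)) * ∫ t in Set.Ioc r ρ₀, t^((1:ℝ)-2*s) := integral_const_mul _ _
      have step3 : ∫ t in Set.Ioc r ρ₀, t^((1:ℝ)-2*s) ≤ ∫ t in Set.Ioc 0 ρ₀, t^((1:ℝ)-2*s) := by
        refine setIntegral_mono_set ((intervalIntegral.intervalIntegrable_rpow'
          (by linarith)).1) ?_ (HasSubset.Subset.eventuallyLE (Set.Ioc_subset_Ioc_left hr.le))
        filter_upwards [ae_restrict_mem measurableSet_Ioc] with t ht
        exact Real.rpow_nonneg ht.1.le _
      have step4 : ∫ t in Set.Ioc 0 ρ₀, t^((1:ℝ)-2*s) = ρ₀^(2-2*s)/(2-2*s) := by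
        rw [← intervalIntegral.integral_of_le hρ₀pos.le,
          integral_rpow (Or.inl (by linarith : (-1:ℝ) < 1-2*s)),
          Real.zero_rpow (by linarith : (1:ℝ)-2*s+1 ≠ 0), sub_zero,
          show (1:ℝ)-2*s+1 = 2-2*s by ring]
      calc W ≤ r^(2*s-(N:ℝ)) * ∫ t in Set.Ioc r ρ₀, t^((1:ℝ)-2*s) := by
            rw [← step2]; exact step1
        _ ≤ r^(2*s-(N:ℝ)) * (ρ₀^(2-2*s)/(2-2*s)) := by
            rw [← step4]
            exact mul_le_mul_of_nonneg_left step3 (Real.rpow_nonneg hr.le _)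
    have hα : (0:ℝ) ≤ ((N:ℝ)-2*s)/2 := by linarith
    have t1 : r ^ (((N:ℝ)-2*s)/2) * ‖g ρ₀‖ ≤ K1 * (d * ρ₀^(1-s)) := by
      calc r ^ (((N:ℝ)-2*s)/2) * ‖g ρ₀‖
          ≤ ρ₀ ^ (((N:ℝ)-2*s)/2) * (K1 * (ρ₀^(((1:ℝ)-N)/2) * (ρ₀^((1:ℝ)/2) * d))) :=
            mul_le_mul (Real.rpow_le_rpow hr.le hrρ hα) (hPr ρ₀ hρ₀pos) (norm_nonneg _)
              (Real.rpow_nonneg hρ₀pos.le _)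
        _ = K1 * (d * (ρ₀ ^ (((N:ℝ)-2*s)/2) * ρ₀^(((1:ℝ)-N)/2) * ρ₀^((1:ℝ)/2))) := by ring
        _ = K1 * (d * ρ₀^(1-s)) := by
            rw [← Real.rpow_add hρ₀pos, ← Real.rpow_add hρ₀pos,
              show (((N:ℝ)-2*s)/2 + ((1:ℝ)-N)/2 + (1:ℝ)/2) = 1-s by ring]
    have t2 : r ^ (((N:ℝ)-2*s)/2) * ∫ t in Set.Ioc r ρ₀, h t ≤ K2 * (d * ρ₀^(1-s)) := by
      have h5 : r ^ (((N:ℝ)-2*s)/2) * ∫ t in Set.Ioc r ρ₀, h t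
          ≤ r ^ (((N:ℝ)-2*s)/2) * (W^((1:ℝ)/2) * (B/c)^((1:ℝ)/2)) :=
        mul_le_mul_of_nonneg_left hcs (Real.rpow_nonneg hr.le _)
      have h6 : r ^ (((N:ℝ)-2*s)/2) * W^((1:ℝ)/2) ≤ (ρ₀^(2-2*s)/(2-2*s))^((1:ℝ)/2) := by
        have e1 : r ^ (((N:ℝ)-2*s)/2) = (r^((N:ℝ)-2*s))^((1:ℝ)/2) := by
          rw [← Real.rpow_mul hr.le]; congr 1; ring
        rw [e1, ← Real.mul_rpow (Real.rpow_nonneg hr.le _) hW0]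
        refine Real.rpow_le_rpow (mul_nonneg (Real.rpow_nonneg hr.le _) hW0) ?_ (by norm_num)
        calc r^((N:ℝ)-2*s) * W ≤ r^((N:ℝ)-2*s) * (r^(2*s-(N:ℝ)) * (ρ₀^(2-2*s)/(2-2*s))) :=
              mul_le_mul_of_nonneg_left hWb (Real.rpow_nonneg hr.le _)
          _ = (r^((N:ℝ)-2*s) * r^(2*s-(N:ℝ))) * (ρ₀^(2-2*s)/(2-2*s)) := by ring
          _ = ρ₀^(2-2*s)/(2-2*s) := by
              rw [← Real.rpow_add hr, show ((N:ℝ)-2*s) + (2*s-(N:ℝ)) = 0 by ring,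
                Real.rpow_zero, one_mul]
      have h7 : (ρ₀^(2-2*s)/(2-2*s))^((1:ℝ)/2) * (B/c)^((1:ℝ)/2) = K2 * (d * ρ₀^(1-s)) := by
        have e2 : (ρ₀^(2-2*s))^((1:ℝ)/2) = ρ₀^(1-s) := by
          rw [← Real.rpow_mul hρ₀pos.le]; congr 1; ring
        have e3 : K2 = ((c^((1:ℝ)/2)) * ((2-2*s)^((1:ℝ)/2)))⁻¹ := by
          rw [hK2def, one_div, Real.inv_rpow (by positivity),
            Real.mul_rpow hcpos.le h22s.le]
        have hY : (2-2*s)^((1:ℝ)/2) ≠ 0 := (Real.rpow_pos_of_pos h22s _).ne'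
        have hZ : (c:ℝ)^((1:ℝ)/2) ≠ 0 := (Real.rpow_pos_of_pos hcpos _).ne'
        rw [Real.div_rpow (Real.rpow_nonneg hρ₀pos.le _) h22s.le,
          Real.div_rpow hB0 hcpos.le, e2, ← hddef, e3]
        field_simp
      calc r ^ (((N:ℝ)-2*s)/2) * ∫ t in Set.Ioc r ρ₀, h t
          ≤ r ^ (((N:ℝ)-2*s)/2) * (W^((1:ℝ)/2) * (B/c)^((1:ℝ)/2)) := h5
        _ = (r ^ (((N:ℝ)-2*s)/2) * W^((1:ℝ)/2)) * (B/c)^((1:ℝ)/2) := by ring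
        _ ≤ (ρ₀^(2-2*s)/(2-2*s))^((1:ℝ)/2) * (B/c)^((1:ℝ)/2) :=
            mul_le_mul_of_nonneg_right h6
              (Real.rpow_nonneg (div_nonneg hB0 hcpos.le) _)
        _ = K2 * (d * ρ₀^(1-s)) := h7
    calc r ^ (((N:ℝ)-2*s)/2) * ‖g r‖
        ≤ r ^ (((N:ℝ)-2*s)/2) * (‖g ρ₀‖ + ∫ t in Set.Ioc r ρ₀, h t) :=
          mul_le_mul_of_nonneg_left hq (Real.rpow_nonneg hr.le _)
      _ = r ^ (((N:ℝ)-2*s)/2) * ‖g ρ₀‖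
          + r ^ (((N:ℝ)-2*s)/2) * ∫ t in Set.Ioc r ρ₀, h t := by ring
      _ ≤ K1 * (d * ρ₀^(1-s)) + K2 * (d * ρ₀^(1-s)) := add_le_add t1 t2
      _ = (K1+K2) * (d * ρ₀^(1-s)) := by ring
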